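/- arXiv:math/0211069 — 2 statements merged into one kernel-verified Lean document; each statement's English description precedes it below -/
import Mathlib

section
/- For every proper metric space X one has asind X ≤ asInd X, where asind is the small inductive asymptotic dimension and asInd is the asymptotic inductive dimension. -/
universe u

/-- A bounded continuous function `φ : X → ℝ` is slowly oscillating if, for all `r, ε > 0`,
its oscillation over `r`-balls is `< ε` off some compact set. -/
def SlowlyOscillating {X : Type*} [MetricSpace X] (φ : X → ℝ) : Prop :=
  Continuous φ ∧ (∃ C : ℝ, ∀ x, |φ x| ≤ C) ∧
  ∀ r : ℝ, 0 < r → ∀ ε : ℝ, 0 < ε → ∃ K : Set X, IsCompact K ∧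
    ∀ x, x ∉ K → ∀ y, dist x y < r → |φ y - φ x| < ε

/-- The ambient space in which the Higson compactification is realized:
the product of one copy of `ℝ` for each slowly oscillating function. -/
def HigsonSpace (X : Type u) [MetricSpace X] : Type u :=
  {φ : X → ℝ // SlowlyOscillating φ} → ℝ

noncomputable instance (X : Type u) [MetricSpace X] : TopologicalSpace (HigsonSpace X) :=
  Pi.topologicalSpace

/-- The canonical evaluation map of `X` into `HigsonSpace X`. -/
def higsonEmb (X : Type u) [MetricSpace X] : X → HigsonSpace X :=
  fun x φ => φ.1 x

/-- The Higson compactification `X̄` of `X`. -/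
def higsonCompactification (X : Type u) [MetricSpace X] : Set (HigsonSpace X) :=
  closure (Set.range (higsonEmb X))

/-- The Higson corona `νX = X̄ ∖ X`. -/
def higsonCorona (X : Type u) [MetricSpace X] : Set (HigsonSpace X) :=
  higsonCompactification X \ Set.range (higsonEmb X)

/-- The trace `A' = cl_{X̄}(A) ∩ νX` of `A ⊆ X` on the Higson corona. -/
def higsonTrace (X : Type u) [MetricSpace X] (A : Set X) : Set (HigsonSpace X) :=
  closure (higsonEmb X '' A) ∩ higsonCorona X

/-- `C` is a separator between `A` and `B` inside the subspace `W`: `C` is closed in `W` and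
`W ∖ C` splits into two disjoint relatively open pieces containing `A` and `B` respectively. -/
def SepIn {H : Type*} [TopologicalSpace H] (W A B C : Set H) : Prop :=
  C ⊆ W ∧ (∃ C' : Set H, IsClosed C' ∧ C = C' ∩ W) ∧
  ∃ U V : Set H, IsOpen U ∧ IsOpen V ∧ Disjoint (U ∩ W) (V ∩ W) ∧
    A ⊆ U ∧ B ⊆ V ∧ W \ C = (U ∩ W) ∪ (V ∩ W)

/-- `A` and `B` are asymptotically disjoint: outside of suitable bounded sets they are
arbitrarily far from each other. -/
def AsympDisjoint {X : Type*} [MetricSpace X] (A B : Set X) : Prop :=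
  ∀ R : ℝ, ∃ K : Set X, Bornology.IsBounded K ∧
    ∀ a ∈ A \ K, ∀ b ∈ B \ K, R ≤ dist a b

/-- `C` is an asymptotic separator between `A` and `B`: its trace separates the traces
of `A` and `B` in the Higson corona. -/
def IsAsympSeparator (X : Type u) [MetricSpace X] (A B C : Set X) : Prop :=
  SepIn (higsonCorona X) (higsonTrace X A) (higsonTrace X B) (higsonTrace X C)

/-- `AsIndLE k X` means `asInd X ≤ k - 1` for the asymptotic inductive dimension:
`asInd X ≤ -1` iff `X` is bounded, and `asInd X ≤ n` iff any two asymptotically disjoint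
subsets admit an asymptotic separator `C` with `asInd C ≤ n - 1`. -/
def AsIndLE : (k : ℕ) → (Y : Type u) → [MetricSpace Y] → Prop
  | 0, Y, _ => Bornology.IsBounded (Set.univ : Set Y)
  | k + 1, Y, _ =>
    ∀ A B : Set Y, AsympDisjoint A B →
      ∃ C : Set Y, IsAsympSeparator Y A B C ∧ AsIndLE k ↥C

/-- `AsindLE k X` means `asind X ≤ k - 1` for the small inductive asymptotic dimension. -/
def AsindLE : (k : ℕ) → (Y : Type u) → [MetricSpace Y] → Prop
  | 0, Y, _ => Bornology.IsBounded (Set.univ : Set Y)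
  | k + 1, Y, _ =>
    ∀ A : Set Y, ∀ p ∈ higsonCorona Y \ higsonTrace Y A,
      ∃ C : Set Y, SepIn (higsonCorona Y) (higsonTrace Y A) {p} (higsonTrace Y C) ∧
        AsindLE k ↥C

lemma asind_le_asInd_aux : ∀ (k : ℕ) (Y : Type u) [MetricSpace Y],
    AsIndLE k Y → AsindLE k Y := by
  intro k
  induction k with
  | zero => intro Y _ h; exact h
  | succ k ih =>
    intro Y _ h A p hp
    obtain ⟨hpc, hpA⟩ := hp
    have hpclos : p ∈ closure (Set.range (higsonEmb Y)) := hpc.1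
    have hpnA : p ∉ closure (higsonEmb Y '' A) := fun hc => hpA ⟨hc, hpc⟩
    have hopen : IsOpen (closure (higsonEmb Y '' A))ᶜ := isClosed_closure.isOpen_compl
    replace hopen := isOpen_pi_iff.mp hopen
    obtain ⟨I, u, hIu, hpi⟩ := hopen p hpnA
    have hεex : ∀ φ ∈ I, ∃ δ > 0, Metric.ball (p φ) δ ⊆ u φ := by
      intro φ hφ
      exact Metric.isOpen_iff.mp (hIu φ hφ).1 _ (hIu φ hφ).2
    choose! ε hε1 hε2 using hεex
    set B : Set Y := {x | ∀ φ ∈ I, dist (φ.1 x) (p φ) ≤ ε φ / 2} with hBdef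
    have hAfar : ∀ a ∈ A, ∃ φ ∈ I, ε φ ≤ dist (φ.1 a) (p φ) := by
      intro a ha
      have hnm : higsonEmb Y a ∉ (I : Set _).pi u := by
        intro hmem
        exact hpi hmem (subset_closure ⟨a, ha, rfl⟩)
      replace hnm : ¬ ∀ i ∈ (I : Set _), higsonEmb Y a i ∈ u i := fun hm => hnm (Set.mem_pi.mpr hm)
      push_neg at hnm
      obtain ⟨φ, hφ, hnot⟩ := hnm
      refine ⟨φ, hφ, ?_⟩
      by_contra hlt
      push_neg at hlt
      exact hnot (hε2 φ hφ (Metric.mem_ball.mpr hlt))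
    have hpB : p ∈ higsonTrace Y B := by
      refine ⟨?_, hpc⟩
      rw [mem_closure_iff]
      intro O hO hpO
      have hO' : IsOpen (O ∩ (I : Set _).pi fun φ => Metric.ball (p φ) (ε φ / 2)) :=
        hO.inter (isOpen_set_pi I.finite_toSet fun φ _ => Metric.isOpen_ball)
      have hpO' : p ∈ O ∩ (I : Set _).pi fun φ => Metric.ball (p φ) (ε φ / 2) :=
        ⟨hpO, fun φ hφ => Metric.mem_ball_self (half_pos (hε1 φ hφ))⟩
      obtain ⟨f, ⟨hfO, hfpi⟩, x, rfl⟩ := mem_closure_iff.mp hpclos _ hO' hpO'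
      exact ⟨higsonEmb Y x, hfO,
        ⟨x, fun φ hφ => (Metric.mem_ball.mp (hfpi φ hφ)).le, rfl⟩⟩
    have hAB : AsympDisjoint A B := by
      intro R
      have hKex : ∀ φ ∈ I, ∃ K : Set Y, IsCompact K ∧
          ∀ x, x ∉ K → ∀ y, dist x y < max R 1 → |φ.1 y - φ.1 x| < ε φ / 2 :=
        fun φ hφ => φ.2.2.2 (max R 1) (lt_of_lt_of_le one_pos (le_max_right R 1))
          (ε φ / 2) (half_pos (hε1 φ hφ))
      choose! K hK1 hK2 using hKex
      refine ⟨⋃ φ ∈ I, K φ, ?_, ?_⟩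
      · exact (Bornology.isBounded_biUnion I.finite_toSet).2
          fun φ hφ => (hK1 φ hφ).isBounded
      · intro a ha b hb
        by_contra hR
        push_neg at hR
        obtain ⟨φ, hφ, hfar⟩ := hAfar a ha.1
        have haK : a ∉ K φ := fun hc => ha.2 (Set.mem_biUnion hφ hc)
        have hosc := hK2 φ hφ a haK b (lt_of_lt_of_le hR (le_max_left R 1))
        have hbB : dist (φ.1 b) (p φ) ≤ ε φ / 2 := hb.1 φ hφ
        have hab2 : dist (φ.1 a) (φ.1 b) < ε φ / 2 := by
          rw [Real.dist_eq, abs_sub_comm]; exact hosc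
        have htri := dist_triangle (φ.1 a) (φ.1 b) (p φ)
        linarith
    obtain ⟨C, hsep, hC⟩ := h A B hAB
    obtain ⟨h1, h2, U, V, hU, hV, hdis, hAU, hBV, hsplit⟩ := hsep
    exact ⟨C, ⟨h1, h2, U, V, hU, hV, hdis, hAU,
      Set.singleton_subset_iff.mpr (hBV hpB), hsplit⟩, ih ↥C hC⟩

/-- for every proper metric space, `asind X ≤ asInd X`
(`AsIndLE k X` means `asInd X ≤ k - 1`, and similarly for `AsindLE`). -/
theorem asind_le_asInd (X : Type u) [MetricSpace X] [ProperSpace X] (k : ℕ)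
    (h : AsIndLE k X) : AsindLE k X :=
  asind_le_asInd_aux k X h
end

section
/- Let X be a proper uniformly arcwise connected metric space, let A and B be asymptotically disjoint subsets of X, and let C be a separator between A and B in X such that C and A ∪ B are asymptotically disjoint. Then C is an asymptotic separator between A and B in X. -/
universe u

/-- `X` is uniformly arcwise connected: nearby points are joined by paths of small diameter. -/
def UnifArcConnected (X : Type*) [MetricSpace X] : Prop :=
  ∀ ε : ℝ, 0 < ε → ∃ δ : ℝ, ∀ x y : X, dist x y < ε →
    ∃ p : Path x y, Metric.diam (Set.range p) ≤ δ

/-- `C` is a separator between `A` and `B` in the whole space. -/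
def IsSeparator {Z : Type*} [TopologicalSpace Z] (A B C : Set Z) : Prop :=
  IsClosed C ∧ ∃ U V : Set Z, IsOpen U ∧ IsOpen V ∧ Disjoint U V ∧
    A ⊆ U ∧ B ⊆ V ∧ Cᶜ = U ∪ V

section Plumbing

variable {X : Type u} [MetricSpace X]

lemma higsonEmb_continuous : Continuous (higsonEmb X) :=
  continuous_pi fun φ => φ.2.1

lemma continuous_eval (ψ : {φ : X → ℝ // SlowlyOscillating φ}) :
    Continuous (fun z : HigsonSpace X => z ψ) :=
  continuous_apply (A := fun _ : {φ : X → ℝ // SlowlyOscillating φ} => ℝ) ψ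

/-- if ψ = c on S then the ψ-coordinate is c on the closure of emb '' S. -/
lemma eval_eq_on_closure (ψ : {φ : X → ℝ // SlowlyOscillating φ}) (S : Set X) (c : ℝ)
    (h : ∀ x ∈ S, ψ.1 x = c) {p : HigsonSpace X}
    (hp : p ∈ closure (higsonEmb X '' S)) : p ψ = c := by
  have : closure (higsonEmb X '' S) ⊆ {z : HigsonSpace X | z ψ = c} := by
    apply closure_minimal
    · rintro _ ⟨x, hx, rfl⟩; exact h x hx
    · exact isClosed_eq (continuous_eval ψ) continuous_const
  exact this hp

/-- more generally, a functional relation between coordinates propagates to closures. -/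
lemma eval_rel_on_closure (ψ : {φ : X → ℝ // SlowlyOscillating φ}) (S : Set X)
    (G : HigsonSpace X → ℝ) (hG : Continuous G)
    (h : ∀ x ∈ S, ψ.1 x = G (higsonEmb X x)) {p : HigsonSpace X}
    (hp : p ∈ closure (higsonEmb X '' S)) : p ψ = G p := by
  have : closure (higsonEmb X '' S) ⊆ {z : HigsonSpace X | z ψ = G z} := by
    apply closure_minimal
    · rintro _ ⟨x, hx, rfl⟩; exact h x hx
    · exact isClosed_eq (continuous_eval ψ) hG
  exact this hp

lemma t2_higson : T2Space (HigsonSpace X) :=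
  inferInstanceAs (T2Space (∀ _ : {φ : X → ℝ // SlowlyOscillating φ}, ℝ))

variable [ProperSpace X]

/-- corona points of a closure land in the closure of the unbounded part. -/
lemma corona_closure_diff (D K : Set X) (hK : Bornology.IsBounded K) {p : HigsonSpace X}
    (hp : p ∈ closure (higsonEmb X '' D)) (hc : p ∈ higsonCorona X) :
    p ∈ closure (higsonEmb X '' (D \ K)) := by
  have hDsplit : D = (D \ K) ∪ (D ∩ K) := by
    ext x; by_cases hx : x ∈ K <;> simp [hx]
  rw [hDsplit, Set.image_union, closure_union] at hp
  rcases hp with hp | hp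
  · exact hp
  · exfalso
    have hcomp : IsCompact (higsonEmb X '' closure K) :=
      (hK.isCompact_closure).image higsonEmb_continuous
    have hclosed : IsClosed (higsonEmb X '' closure K) :=
      have := t2_higson (X := X); hcomp.isClosed
    have hsub : higsonEmb X '' (D ∩ K) ⊆ higsonEmb X '' closure K :=
      Set.image_mono (fun x hx => subset_closure hx.2)
    have : p ∈ higsonEmb X '' closure K := (closure_minimal hsub hclosed) hp
    rcases this with ⟨x, _, rfl⟩
    exact hc.2 ⟨x, rfl⟩

end Plumbing

lemma le_infDist' {α : Type*} [PseudoMetricSpace α] {s : Set α} (hs : s.Nonempty) {x : α} {d : ℝ}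
    (h : ∀ y ∈ s, d ≤ dist x y) : d ≤ Metric.infDist x s := by
  rw [Metric.infDist_eq_iInf]
  haveI := hs.to_subtype
  exact le_ciInf fun y => h y y.2

lemma aux_minmin {a b s t d : ℝ} (hb : 0 ≤ b) (hs : 1 ≤ s) (ht : 1 ≤ t)
    (hab : |b - a| ≤ d) (hst : |t - s| ≤ d) :
    |min 1 (b/t) - min 1 (a/s)| ≤ 2*d/s := by
  have hs0 : 0 < s := lt_of_lt_of_le one_pos hs
  have ht0 : 0 < t := lt_of_lt_of_le one_pos ht
  have h1 : min 1 (a/s) = min s a / s := by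
    rw [← div_self (ne_of_gt hs0), min_div_div_right (le_of_lt hs0)]
  have h2 : min 1 (b/t) = min t b / t := by
    rw [← div_self (ne_of_gt ht0), min_div_div_right (le_of_lt ht0)]
  rw [h1, h2]
  have e1 : |min t b - min s a| ≤ d :=
    (abs_min_sub_min_le_max t b s a).trans (max_le hst hab)
  have hmt : min t b ≤ t := min_le_left _ _
  have hm0 : 0 ≤ min t b := le_min (le_of_lt ht0) hb
  have identity : min t b / t - min s a / s
      = (min t b - min s a)/s + (min t b) * ((s-t)/(t*s)) := by
    field_simp; ring
  rw [identity]
  have b1 : |(min t b - min s a)/s| ≤ d/s := by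
    rw [abs_div, abs_of_pos hs0]
    exact div_le_div_of_nonneg_right e1 hs0.le
  have b2 : |(min t b) * ((s-t)/(t*s))| ≤ d/s := by
    rw [abs_mul, abs_div, abs_of_nonneg hm0, abs_of_pos (mul_pos ht0 hs0)]
    have hts : |s - t| ≤ d := by rwa [abs_sub_comm]
    calc min t b * (|s - t| / (t * s)) ≤ t * (d / (t*s)) := by
          apply mul_le_mul hmt (div_le_div_of_nonneg_right hts (mul_pos ht0 hs0).le)
            (by positivity) (le_of_lt ht0)
      _ = d / s := by field_simp
  calc |(min t b - min s a)/s + (min t b) * ((s-t)/(t*s))|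
      ≤ |(min t b - min s a)/s| + |(min t b) * ((s-t)/(t*s))| := abs_add_le _ _
    _ ≤ d/s + d/s := add_le_add b1 b2
    _ = 2*d/s := by ring

section Gauge

variable {X : Type u} [MetricSpace X] [ProperSpace X]

/-- From asymptotic disjointness of `D` and `E`, produce a slowly oscillating function
which is `0` on `D` and `1` on `E` far from the base point. -/
lemma exists_sep_fun {D E : Set X} (x₀ : X) (hD : D.Nonempty) (h : AsympDisjoint D E) :
    ∃ ψ : X → ℝ, SlowlyOscillating ψ ∧ (∀ x ∈ D, ψ x = 0) ∧
      ∃ ρ : ℝ, ∀ e ∈ E, ρ < dist e x₀ → ψ e = 1 := by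
  classical
  -- step 1: radii controlling asymptotic disjointness
  have hK : ∀ n : ℕ, ∃ rn : ℝ, 0 ≤ rn ∧ ∀ d ∈ D, ∀ e ∈ E,
      rn < dist d x₀ → rn < dist e x₀ → (n:ℝ) + 2 ≤ dist d e := by
    intro n
    obtain ⟨K, hKb, hKp⟩ := h ((n:ℝ)+2)
    obtain ⟨r, hr⟩ := hKb.subset_closedBall x₀
    refine ⟨max r 0, le_max_right _ _, ?_⟩
    intro d hd e he hdd hee
    have hdK : d ∉ K := fun hdk => absurd (hr hdk)
      (by simp only [Metric.mem_closedBall]; push_neg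
          exact lt_of_le_of_lt (le_max_left r 0) hdd)
    have heK : e ∉ K := fun hek => absurd (hr hek)
      (by simp only [Metric.mem_closedBall]; push_neg
          exact lt_of_le_of_lt (le_max_left r 0) hee)
    exact hKp d ⟨hd, hdK⟩ e ⟨he, heK⟩
  choose ρf hρ0 hρprop using hK
  -- step 2: increasing thresholds
  set T : ℕ → ℝ := fun n => ∑ k ∈ Finset.range (n+1), (ρf k + k + 3) with hT
  have hterm : ∀ k : ℕ, (0:ℝ) ≤ ρf k + k + 3 := by
    intro k; have := hρ0 k; positivity
  have hTmono : Monotone T := by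
    intro i j hij
    apply Finset.sum_le_sum_of_subset_of_nonneg
    · exact Finset.range_subset_range.mpr (by omega)
    · intro k _ _; exact hterm k
  have hTge : ∀ n : ℕ, ρf n + n + 2 ≤ T n := by
    intro n
    have : ρf n + n + 3 ≤ T n :=
      Finset.single_le_sum (fun k _ => hterm k) (Finset.self_mem_range_succ n)
    linarith
  have hTgtn : ∀ n : ℕ, (n:ℝ) ≤ T n := by
    intro n; have := hTge n; have := hρ0 n; linarith
  -- step 3: key geometric estimate
  have hGeo : ∀ e ∈ E, ∀ n : ℕ, T n ≤ dist e x₀ → (n:ℝ) + 2 ≤ Metric.infDist e D := by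
    intro e he n hTn
    apply le_infDist' hD
    intro d hd
    by_cases hcase : ρf n < dist d x₀
    · have hee : ρf n < dist e x₀ := by
        have h1 : ρf n < T n := by have := hTge n; have : (0:ℝ) ≤ n := n.cast_nonneg; linarith
        linarith
      have := hρprop n d hd e he hcase hee
      rwa [dist_comm] at this
    · push_neg at hcase
      have htri : dist e x₀ ≤ dist e d + dist d x₀ := dist_triangle e d x₀
      have := hTge n
      linarith
  -- step 4: the gauge m
  set f : ℕ → ℝ → ℝ := fun n t => (n:ℝ) + 2 + max 0 (t - T (n+1)) with hf
  have hf2 : ∀ n t, 2 ≤ f n t := by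
    intro n t
    have h1 : (0:ℝ) ≤ max 0 (t - T (n+1)) := le_max_left _ _
    have : (0:ℝ) ≤ n := n.cast_nonneg
    simp only [hf]; linarith
  set m : ℝ → ℝ := fun t => ⨅ n : ℕ, f n t with hm
  have hbdd : ∀ t, BddBelow (Set.range fun n : ℕ => f n t) := by
    intro t; exact ⟨2, by rintro _ ⟨n, rfl⟩; exact hf2 n t⟩
  have hm_le : ∀ t n, m t ≤ f n t := fun t n => ciInf_le (hbdd t) n
  have hm_ge2 : ∀ t, 2 ≤ m t := fun t => le_ciInf fun n => hf2 n t
  have hm_lip : ∀ s t : ℝ, m t ≤ m s + |t - s| := by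
    intro s t
    have step : ∀ n, f n t ≤ f n s + |t - s| := by
      intro n
      simp only [hf]
      have h1 : max 0 (t - T (n+1)) ≤ max 0 (s - T (n+1)) + |t - s| := by
        apply max_le
        · have : (0:ℝ) ≤ max 0 (s - T (n+1)) := le_max_left _ _
          have := abs_nonneg (t - s); linarith
        · have h2 : t - T (n+1) ≤ (s - T (n+1)) + |t - s| := by
            have := le_abs_self (t - s); linarith
          have : s - T (n+1) ≤ max 0 (s - T (n+1)) := le_max_right _ _
          linarith
      linarith
    have : ∀ n, m t - |t - s| ≤ f n s := fun n => by
      have := (hm_le t n).trans (step n); linarith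
    have := le_ciInf this
    change m t - |t - s| ≤ m s at this
    linarith
  have hm_big : ∀ M : ℝ, ∃ Tt : ℝ, ∀ t, Tt ≤ t → M ≤ m t := by
    intro M
    obtain ⟨N, hN⟩ := exists_nat_ge M
    refine ⟨T (N+1) + M, fun t ht => le_ciInf fun n => ?_⟩
    by_cases hn : N ≤ n
    · have h1 : (N:ℝ) ≤ n := by exact_mod_cast hn
      have h2 : (0:ℝ) ≤ max 0 (t - T (n+1)) := le_max_left _ _
      simp only [hf]; linarith
    · push_neg at hn
      have h1 : T (n+1) ≤ T (N+1) := hTmono (by omega)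
      have h2 : M ≤ t - T (n+1) := by linarith
      have h3 : t - T (n+1) ≤ max 0 (t - T (n+1)) := le_max_right _ _
      have : (0:ℝ) ≤ n := n.cast_nonneg
      simp only [hf]; linarith
  have hm_val : ∀ e ∈ E, T 0 ≤ dist e x₀ → m (dist e x₀) ≤ Metric.infDist e D := by
    intro e he h0
    set t := dist e x₀ with htdef
    obtain ⟨B, hB⟩ := exists_nat_gt t
    have hBP : ¬ (T B ≤ t) := by
      have := hTgtn B; push_neg; linarith
    set P := fun k => T k ≤ t with hP
    set n := Nat.findGreatest P B with hn
    have hn1 : P n := Nat.findGreatest_spec (Nat.zero_le B) h0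
    have hnB : n ≠ B := fun hEq => hBP (hEq ▸ hn1)
    have hnB' : n + 1 ≤ B := by
      have := Nat.findGreatest_le (P := P) B
      omega
    have hn2 : ¬ P (n+1) := Nat.findGreatest_is_greatest (by omega) hnB'
    have ht1 : t ≤ T (n+1) := le_of_lt (not_le.mp hn2)
    have h1 : m t ≤ (n:ℝ) + 2 := by
      have := hm_le t n
      simp only [hf] at this
      rw [max_eq_left (by linarith : t - T (n+1) ≤ 0)] at this
      linarith
    exact h1.trans (hGeo e he n hn1)
  -- step 5: the function ψ
  have hmpos : ∀ t, (0:ℝ) < m t := fun t => lt_of_lt_of_le two_pos (hm_ge2 t)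
  have hmlipW : LipschitzWith 1 m := by
    apply LipschitzWith.of_dist_le_mul
    intro a b
    rw [Real.dist_eq, Real.dist_eq, NNReal.coe_one, one_mul]
    rw [abs_sub_le_iff]
    constructor
    · have := hm_lip b a; have := le_abs_self (a - b); rw [abs_sub_comm] at *; linarith [hm_lip b a]
    · linarith [hm_lip a b, le_abs_self (b - a), (abs_sub_comm b a)]
  refine ⟨fun x => min 1 (Metric.infDist x D / m (dist x x₀)), ⟨?_, ⟨1, ?_⟩, ?_⟩, ?_, ?_⟩
  · -- continuity
    apply Continuous.min continuous_const
    apply Continuous.div (Metric.continuous_infDist_pt D)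
      (hmlipW.continuous.comp (continuous_id.dist continuous_const))
    intro x; exact ne_of_gt (hmpos _)
  · -- bound
    intro x
    rw [abs_le]
    constructor
    · have h1 : (0:ℝ) ≤ Metric.infDist x D / m (dist x x₀) :=
        div_nonneg Metric.infDist_nonneg (hmpos _).le
      have := le_min zero_le_one h1
      linarith
    · exact min_le_left _ _
  · -- slow oscillation
    intro r hr ε hε
    obtain ⟨Tt, hTt⟩ := hm_big (2*r/ε + 1)
    refine ⟨Metric.closedBall x₀ (max Tt 0), isCompact_closedBall _ _, ?_⟩
    intro x hx y hxy
    have hxT : Tt ≤ dist x x₀ := by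
      have h1 : ¬ dist x x₀ ≤ max Tt 0 := fun hh => hx (Metric.mem_closedBall.mpr hh)
      push_neg at h1
      exact (le_max_left Tt 0).trans h1.le
    set a := Metric.infDist x D
    set b := Metric.infDist y D
    set s := m (dist x x₀) with hsdef
    set t' := m (dist y x₀) with htdef'
    have hs : 2*r/ε + 1 ≤ s := hTt _ hxT
    have hab : |b - a| ≤ dist x y := by
      rw [abs_sub_le_iff]
      constructor
      · have h1 := Metric.infDist_le_infDist_add_dist (x := y) (y := x) (s := D)
        rw [dist_comm y x] at h1
        linarith
      · linarith [Metric.infDist_le_infDist_add_dist (x := x) (y := y) (s := D)]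
    have hst : |t' - s| ≤ dist x y := by
      rw [abs_sub_le_iff]
      have hd1 : |dist y x₀ - dist x x₀| ≤ dist y x := abs_dist_sub_le y x x₀
      rw [abs_sub_le_iff] at hd1
      rw [dist_comm y x] at hd1
      constructor
      · have := hm_lip (dist x x₀) (dist y x₀)
        have := le_trans this (by linarith [abs_sub_le_iff.mpr hd1] :
          m (dist x x₀) + |dist y x₀ - dist x x₀| ≤ m (dist x x₀) + dist x y)
        linarith
      · have := hm_lip (dist y x₀) (dist x x₀)
        have h2 : |dist x x₀ - dist y x₀| ≤ dist x y := by
          rw [abs_sub_le_iff]; exact ⟨hd1.2, hd1.1⟩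
        linarith
    have hs1 : (1:ℝ) ≤ s := by linarith [hm_ge2 (dist x x₀), hs]
    have ht1 : (1:ℝ) ≤ t' := by linarith [hm_ge2 (dist y x₀)]
    have key := aux_minmin (a := a) (b := b) (s := s) (t := t') (d := dist x y)
      Metric.infDist_nonneg hs1 ht1 hab hst
    have hspos : 0 < s := lt_of_lt_of_le one_pos hs1
    have hεs : 2*r + ε ≤ ε * s := by
      have h1 : ε * (2*r/ε + 1) ≤ ε * s := mul_le_mul_of_nonneg_left hs hε.le
      have h2 : ε * (2*r/ε + 1) = 2*r + ε := by field_simp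
      linarith
    have hfin : 2 * dist x y / s < ε := by
      rw [div_lt_iff₀ hspos]
      have hd0 : 0 ≤ dist x y := dist_nonneg
      linarith
    calc |min 1 (b / t') - min 1 (a / s)| ≤ 2 * dist x y / s := key
      _ < ε := hfin
  · -- ψ = 0 on D
    intro x hx
    show min 1 (Metric.infDist x D / m (dist x x₀)) = 0
    rw [Metric.infDist_zero_of_mem hx, zero_div]
    simp
  · -- ψ = 1 on E far away
    refine ⟨max (T 0) 0, ?_⟩
    intro e he hfar
    have h0 : T 0 ≤ dist e x₀ := ((le_max_left _ _).trans hfar.le)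
    have := hm_val e he h0
    show min 1 (Metric.infDist e D / m (dist e x₀)) = 1
    rw [min_eq_left ((one_le_div (hmpos _)).mpr this)]

end Gauge

section Cpart

variable {X : Type u} [MetricSpace X]

lemma path_crossing {U V C : Set X} (hd : Disjoint U V) (hUo : IsOpen U) (hVo : IsOpen V)
    (hcomp : Cᶜ = U ∪ V) {x y : X} (hx : x ∈ U) (hy : y ∈ V) (p : Path x y) :
    ∃ c ∈ C, c ∈ Set.range p := by
  by_contra hcon
  push_neg at hcon
  have hsub : Set.range p ⊆ U ∪ V := by
    intro z hz
    have hzC : z ∉ C := fun hzC => hcon z hzC hz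
    have : z ∈ Cᶜ := hzC
    rwa [hcomp] at this
  have hpre : IsPreconnected (Set.range p) := isPreconnected_range p.continuous
  obtain ⟨z, hz⟩ := hpre U V hUo hVo hsub ⟨x, ⟨0, p.source⟩, hx⟩ ⟨y, ⟨1, p.target⟩, hy⟩
  exact Set.disjoint_left.mp hd hz.2.1 hz.2.2


set_option maxHeartbeats 1000000 in
/-- key separation lemma: the closures of the two sides of a separator meet only inside
the closure of the separator, in the Higson space. -/
lemma closure_side_inter (huac : UnifArcConnected X) {U V C : Set X}
    (hUo : IsOpen U) (hVo : IsOpen V) (hd : Disjoint U V) (hcomp : Cᶜ = U ∪ V)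
    {p : HigsonSpace X} (hpU : p ∈ closure (higsonEmb X '' U))
    (hpV : p ∈ closure (higsonEmb X '' V)) : p ∈ closure (higsonEmb X '' C) := by
  classical
  by_contra hpC
  -- a basic neighborhood of p avoiding emb '' C
  obtain ⟨O, hOopen, hpO, hOC⟩ : ∃ O, IsOpen O ∧ p ∈ O ∧ ¬(O ∩ higsonEmb X '' C).Nonempty := by
    rw [mem_closure_iff] at hpC
    push_neg at hpC
    obtain ⟨O, h1, h2, h3⟩ := hpC
    exact ⟨O, h1, h2, by rw [Set.not_nonempty_iff_eq_empty]; exact h3⟩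
  obtain ⟨I, uu, hIu, hIsub⟩ := (isOpen_pi_iff.mp hOopen) p hpO
  have hex : ∀ j ∈ I, ∃ e : ℝ, 0 < e ∧ Metric.ball (p j) e ⊆ uu j := by
    intro j hj
    obtain ⟨e, he, hb⟩ := Metric.isOpen_iff.mp (hIu j hj).1 (p j) (hIu j hj).2
    exact ⟨e, he, hb⟩
  choose! ef hef hbf using hex
  obtain ⟨ε, hεpos, hεle⟩ : ∃ ε : ℝ, 0 < ε ∧ ∀ j ∈ I, ε ≤ ef j := by
    by_cases hne : I.Nonempty
    · refine ⟨min 1 (I.inf' hne ef), lt_min one_pos ?_, fun j hj => (min_le_right _ _).trans (Finset.inf'_le ef hj)⟩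
      rw [Finset.lt_inf'_iff]
      exact fun j hj => hef j hj
    · exact ⟨1, one_pos, fun j hj => absurd ⟨j, hj⟩ hne⟩
  have hball : ∀ x : X, (∀ j ∈ I, |j.1 x - p j| < ε) → higsonEmb X x ∈ O := by
    intro x hx
    apply hIsub
    refine Set.mem_pi.mpr ?_
    intro j hj
    apply hbf j hj
    rw [Metric.mem_ball, Real.dist_eq]
    exact lt_of_lt_of_le (hx j hj) (hεle j hj)
  -- the function Ψ : 1 on C, coordinate value 0 at p
  set Ψ : X → ℝ := fun x => min 1 ((∑ j ∈ I, |j.1 x - p j|) / ε) with hΨdef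
  have hsum_nonneg : ∀ x : X, 0 ≤ (∑ j ∈ I, |j.1 x - p j|) := fun x =>
    Finset.sum_nonneg fun j _ => abs_nonneg _
  have hΨ01 : ∀ x, 0 ≤ Ψ x ∧ Ψ x ≤ 1 := fun x =>
    ⟨le_min zero_le_one (div_nonneg (hsum_nonneg x) hεpos.le), min_le_left _ _⟩
  have hΨC : ∀ c ∈ C, Ψ c = 1 := by
    intro c hc
    have hnot : ¬ ((∑ j ∈ I, |j.1 c - p j|) / ε < 1) := by
      intro hlt
      rw [div_lt_one hεpos] at hlt
      have : higsonEmb X c ∈ O := by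
        apply hball
        intro j hj
        exact lt_of_le_of_lt
          (Finset.single_le_sum (f := fun j => |j.1 c - p j|) (fun i _ => abs_nonneg _) hj) hlt
      exact hOC ⟨higsonEmb X c, this, ⟨c, hc, rfl⟩⟩
    push_neg at hnot
    exact min_eq_left hnot
  have hΨcont : Continuous Ψ := by
    apply Continuous.min continuous_const
    apply Continuous.div_const
    exact continuous_finset_sum I fun j _ => ((j.2.1).sub continuous_const).abs
  have hΨso : SlowlyOscillating Ψ := by
    refine ⟨hΨcont, ⟨1, fun x => abs_le.mpr ⟨by linarith [(hΨ01 x).1], (hΨ01 x).2⟩⟩, ?_⟩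
    intro r hr ε' hε'
    have hbound : (0:ℝ) < ε * ε' / (I.card + 1) := by positivity
    have hKs : ∀ j ∈ I, ∃ K : Set X, IsCompact K ∧
        ∀ x, x ∉ K → ∀ y, dist x y < r → |j.1 y - j.1 x| < ε * ε' / (I.card + 1) :=
      fun j _ => j.2.2.2 r hr _ hbound
    choose! Kf hKc hKp using hKs
    refine ⟨⋃ j ∈ I, Kf j, Set.Finite.isCompact_biUnion I.finite_toSet (fun j hj => hKc j hj), ?_⟩
    intro x hx y hxy
    have hxj : ∀ j ∈ I, x ∉ Kf j := by
      intro j hj hmem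
      exact hx (Set.mem_biUnion hj hmem)
    have hterm : ∀ j ∈ I, |(|j.1 y - p j| - |j.1 x - p j|)| ≤ ε * ε' / (I.card + 1) := by
      intro j hj
      have h1 : |(|j.1 y - p j| - |j.1 x - p j|)| ≤ |(j.1 y - p j) - (j.1 x - p j)| :=
        abs_abs_sub_abs_le_abs_sub _ _
      have h2 : (j.1 y - p j) - (j.1 x - p j) = j.1 y - j.1 x := by ring
      rw [h2] at h1
      exact h1.trans (hKp j hj x (hxj j hj) y hxy).le
    have hsumdiff : |(∑ j ∈ I, |j.1 y - p j|) - (∑ j ∈ I, |j.1 x - p j|)| < ε * ε' := by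
      rw [← Finset.sum_sub_distrib]
      calc |∑ j ∈ I, (|j.1 y - p j| - |j.1 x - p j|)|
          ≤ ∑ j ∈ I, |(|j.1 y - p j| - |j.1 x - p j|)| := Finset.abs_sum_le_sum_abs _ _
        _ ≤ ∑ _j ∈ I, ε * ε' / (I.card + 1) := Finset.sum_le_sum hterm
        _ = I.card * (ε * ε' / (I.card + 1)) := by rw [Finset.sum_const, nsmul_eq_mul]
        _ < ε * ε' := by
            have hc : (0:ℝ) ≤ I.card := Nat.cast_nonneg _
            have hcp : (0:ℝ) < (I.card:ℝ) + 1 := by linarith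
            rw [mul_div_assoc', div_lt_iff₀ hcp]
            nlinarith [mul_pos hεpos hε']
    have hminlip : |Ψ y - Ψ x| ≤
        |(∑ j ∈ I, |j.1 y - p j|) / ε - (∑ j ∈ I, |j.1 x - p j|) / ε| := by
      have := abs_min_sub_min_le_max (1:ℝ) ((∑ j ∈ I, |j.1 y - p j|) / ε)
        (1:ℝ) ((∑ j ∈ I, |j.1 x - p j|) / ε)
      simpa using this
    calc |Ψ y - Ψ x| ≤ |(∑ j ∈ I, |j.1 y - p j|) / ε - (∑ j ∈ I, |j.1 x - p j|) / ε| := hminlip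
      _ = |(∑ j ∈ I, |j.1 y - p j|) - (∑ j ∈ I, |j.1 x - p j|)| / ε := by
          rw [div_sub_div_same, abs_div, abs_of_pos hεpos]
      _ < (ε * ε') / ε := by gcongr
      _ = ε' := by field_simp
  -- coordinate of Ψ at p is 0
  have hprange : p ∈ closure (Set.range (higsonEmb X)) :=
    closure_mono (Set.image_subset_range _ _) hpU
  set G : HigsonSpace X → ℝ := fun z => min 1 ((∑ j ∈ I, |z j - p j|) / ε) with hGdef
  have hGcont : Continuous G := by
    apply Continuous.min continuous_const
    apply Continuous.div_const
    exact continuous_finset_sum I fun j _ => ((continuous_eval j).sub continuous_const).abs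
  have hΨp : p ⟨Ψ, hΨso⟩ = 0 := by
    have hrel := eval_rel_on_closure ⟨Ψ, hΨso⟩ Set.univ G hGcont (fun x _ => rfl)
      (by rwa [Set.image_univ])
    rw [hrel, hGdef]
    simp
  -- tripartition helpers
  have hCnot : ∀ z ∈ C, z ∉ U ∧ z ∉ V := by
    intro z hz
    have hz2 : z ∉ Cᶜ := fun hzc => hzc hz
    rw [hcomp] at hz2
    exact ⟨fun hh => hz2 (Or.inl hh), fun hh => hz2 (Or.inr hh)⟩
  have htri : ∀ z : X, z ∈ U ∨ z ∈ V ∨ z ∈ C := by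
    intro z
    by_cases h1 : z ∈ U
    · exact Or.inl h1
    by_cases h2 : z ∈ V
    · exact Or.inr (Or.inl h2)
    · refine Or.inr (Or.inr ?_)
      by_contra h3
      have : z ∈ Cᶜ := h3
      rw [hcomp] at this
      rcases this with hh | hh
      · exact h1 hh
      · exact h2 hh
  set h : X → ℝ := fun x => (if x ∈ U then (-1:ℝ) else if x ∈ V then 1 else 0) * (1 - Ψ x)
    with hhdef
  have hvalU : ∀ z ∈ U, h z = Ψ z - 1 := by
    intro z hz; simp only [hhdef, if_pos hz]; ring
  have hvalV : ∀ z ∈ V, h z = 1 - Ψ z := by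
    intro z hz
    have hzU : z ∉ U := fun hzu => Set.disjoint_left.mp hd hzu hz
    simp only [hhdef, if_neg hzU, if_pos hz]; ring
  have hvalC : ∀ z ∈ C, h z = 0 := by
    intro z hz
    obtain ⟨h1, h2⟩ := hCnot z hz
    simp only [hhdef, if_neg h1, if_neg h2]; ring
  have habs : ∀ z, |h z| ≤ 1 - Ψ z := by
    intro z
    show |(if z ∈ U then (-1:ℝ) else if z ∈ V then 1 else 0) * (1 - Ψ z)| ≤ 1 - Ψ z
    rw [abs_mul]
    have h1 : |1 - Ψ z| = 1 - Ψ z := abs_of_nonneg (by linarith [(hΨ01 z).2])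
    have h2 : |(if z ∈ U then (-1:ℝ) else if z ∈ V then 1 else 0)| ≤ 1 := by
      split_ifs <;> simp
    calc |(if z ∈ U then (-1:ℝ) else if z ∈ V then 1 else 0)| * |1 - Ψ z|
        ≤ 1 * |1 - Ψ z| := mul_le_mul_of_nonneg_right h2 (abs_nonneg _)
      _ = 1 - Ψ z := by rw [one_mul, h1]
  have hcont : Continuous h := by
    rw [continuous_iff_continuousAt]
    intro x
    rcases htri x with hxU | hxV | hxC
    · have heq : ∀ᶠ y in nhds x, Ψ y - 1 = h y := by
        filter_upwards [hUo.mem_nhds hxU] with y hy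
        exact (hvalU y hy).symm
      exact ContinuousAt.congr ((hΨcont.sub continuous_const).continuousAt) heq
    · have heq : ∀ᶠ y in nhds x, 1 - Ψ y = h y := by
        filter_upwards [hVo.mem_nhds hxV] with y hy
        exact (hvalV y hy).symm
      exact ContinuousAt.congr ((continuous_const.sub hΨcont).continuousAt) heq
    · have hx0 : h x = 0 := hvalC x hxC
      unfold ContinuousAt
      rw [hx0]
      have htend : Filter.Tendsto (fun y => 1 - Ψ y) (nhds x) (nhds 0) := by
        have h5 : Continuous (fun y => 1 - Ψ y) := continuous_const.sub hΨcont
        have h6 := h5.tendsto x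
        rwa [hΨC x hxC, sub_self] at h6
      exact squeeze_zero_norm (fun y => by simpa using habs y) htend
  have hso : SlowlyOscillating h := by
    refine ⟨hcont, ⟨1, fun z => (habs z).trans (by linarith [(hΨ01 z).1])⟩, ?_⟩
    intro r hr ε' hε'
    obtain ⟨δ, hδp⟩ := huac r hr
    set δ' := max δ 0 with hδ'def
    have hδ'0 : 0 ≤ δ' := le_max_right δ 0
    obtain ⟨K, hKc, hKp2⟩ := hΨso.2.2 (r + δ' + 1) (by linarith) (ε'/4) (by linarith)
    refine ⟨K, hKc, ?_⟩
    intro x hx y hxy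
    have hΨxy : |Ψ y - Ψ x| < ε'/4 := hKp2 x hx y (by linarith)
    obtain ⟨hl, hu⟩ := abs_lt.mp hΨxy
    have hcrossUV : ∀ x' y' : X, x' ∉ K → dist x' y' < r → x' ∈ U → y' ∈ V →
        (1 - Ψ x' < ε'/4) ∧ (1 - Ψ y' < ε'/2) := by
      intro x' y' hx' hxy' hx'U hy'V
      obtain ⟨pth, hdiam⟩ := hδp x' y' hxy'
      obtain ⟨c, hcC, hcr⟩ := path_crossing hd hUo hVo hcomp hx'U hy'V pth
      have hbd := (isCompact_range pth.continuous).isBounded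
      have hxc : dist x' c ≤ δ' :=
        (Metric.dist_le_diam_of_mem hbd ⟨0, pth.source⟩ hcr).trans
          (hdiam.trans (le_max_left δ 0))
      have e1 : |Ψ c - Ψ x'| < ε'/4 := hKp2 x' hx' c (by linarith)
      have e2 : |Ψ y' - Ψ x'| < ε'/4 := hKp2 x' hx' y' (by linarith)
      have hc1 := hΨC c hcC
      obtain ⟨e1l, e1u⟩ := abs_lt.mp e1
      obtain ⟨e2l, e2u⟩ := abs_lt.mp e2
      constructor <;> linarith
    have hcrossVU : ∀ x' y' : X, x' ∉ K → dist x' y' < r → x' ∈ V → y' ∈ U →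
        (1 - Ψ x' < ε'/4) ∧ (1 - Ψ y' < ε'/2) := by
      intro x' y' hx' hxy' hx'V hy'U
      obtain ⟨pth, hdiam⟩ := hδp x' y' hxy'
      obtain ⟨c, hcC, hcr⟩ := path_crossing hd.symm hVo hUo
        (by rw [hcomp, Set.union_comm]) hx'V hy'U pth
      have hbd := (isCompact_range pth.continuous).isBounded
      have hxc : dist x' c ≤ δ' :=
        (Metric.dist_le_diam_of_mem hbd ⟨0, pth.source⟩ hcr).trans
          (hdiam.trans (le_max_left δ 0))
      have e1 : |Ψ c - Ψ x'| < ε'/4 := hKp2 x' hx' c (by linarith)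
      have e2 : |Ψ y' - Ψ x'| < ε'/4 := hKp2 x' hx' y' (by linarith)
      have hc1 := hΨC c hcC
      obtain ⟨e1l, e1u⟩ := abs_lt.mp e1
      obtain ⟨e2l, e2u⟩ := abs_lt.mp e2
      constructor <;> linarith
    have hx1 := (hΨ01 x).1
    have hx2 := (hΨ01 x).2
    have hy1 := (hΨ01 y).1
    have hy2 := (hΨ01 y).2
    rcases htri x with hxU | hxV | hxC <;> rcases htri y with hyU | hyV | hyC
    · rw [hvalU x hxU, hvalU y hyU, abs_lt]; constructor <;> linarith
    · obtain ⟨b1, b2⟩ := hcrossUV x y hx hxy hxU hyV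
      rw [hvalU x hxU, hvalV y hyV, abs_lt]; constructor <;> linarith
    · have hy3 := hΨC y hyC
      rw [hvalU x hxU, hvalC y hyC, abs_lt]; constructor <;> linarith
    · obtain ⟨b1, b2⟩ := hcrossVU x y hx hxy hxV hyU
      rw [hvalV x hxV, hvalU y hyU, abs_lt]; constructor <;> linarith
    · rw [hvalV x hxV, hvalV y hyV, abs_lt]; constructor <;> linarith
    · have hy3 := hΨC y hyC
      rw [hvalV x hxV, hvalC y hyC, abs_lt]; constructor <;> linarith
    · have hx3 := hΨC x hxC
      rw [hvalC x hxC, hvalU y hyU, abs_lt]; constructor <;> linarith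
    · have hx3 := hΨC x hxC
      rw [hvalC x hxC, hvalV y hyV, abs_lt]; constructor <;> linarith
    · rw [hvalC x hxC, hvalC y hyC, abs_lt]; constructor <;> linarith
  -- conclude
  have hrelU : p ⟨h, hso⟩ = p ⟨Ψ, hΨso⟩ - 1 :=
    eval_rel_on_closure ⟨h, hso⟩ U (fun z => z ⟨Ψ, hΨso⟩ - 1)
      ((continuous_eval _).sub continuous_const) (fun x hxU => hvalU x hxU) hpU
  have hrelV : p ⟨h, hso⟩ = 1 - p ⟨Ψ, hΨso⟩ :=
    eval_rel_on_closure ⟨h, hso⟩ V (fun z => 1 - z ⟨Ψ, hΨso⟩)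
      (continuous_const.sub (continuous_eval _)) (fun x hxV => hvalV x hxV) hpV
  rw [hΨp] at hrelU hrelV
  rw [hrelU] at hrelV
  norm_num at hrelV


end Cpart


section Extra

variable {X : Type u} [MetricSpace X]

lemma AsympDisjoint.symm' {A B : Set X} (h : AsympDisjoint A B) : AsympDisjoint B A := by
  intro R
  obtain ⟨K, hK, hp⟩ := h R
  exact ⟨K, hK, fun b hb a ha => by rw [dist_comm]; exact hp a ha b hb⟩

lemma AsympDisjoint.mono_right' {A B B' : Set X} (h : AsympDisjoint A B) (hB : B' ⊆ B) :
    AsympDisjoint A B' := by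
  intro R
  obtain ⟨K, hK, hp⟩ := h R
  exact ⟨K, hK, fun a ha b hb => hp a ha b ⟨hB hb.1, hb.2⟩⟩

variable [ProperSpace X]

lemma asympDisjoint_side (huac : UnifArcConnected X) {A C U V : Set X}
    (hUo : IsOpen U) (hVo : IsOpen V) (hd : Disjoint U V) (hcomp : Cᶜ = U ∪ V)
    (hAU : A ⊆ U) (hAC : AsympDisjoint A C) : AsympDisjoint A V := by
  intro R
  rcases le_or_gt R 0 with hR | hR
  · exact ⟨∅, Bornology.isBounded_empty, fun a _ b _ => hR.trans dist_nonneg⟩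
  rcases isEmpty_or_nonempty X with hX | hX
  · exact ⟨∅, Bornology.isBounded_empty, fun a _ => (IsEmpty.false a).elim⟩
  obtain ⟨x₀⟩ := hX
  obtain ⟨δ, hδ⟩ := huac R hR
  set δ' := max δ 0 with hδ'
  have hδ'0 : 0 ≤ δ' := le_max_right δ 0
  obtain ⟨K, hKb, hKp⟩ := hAC (δ' + 1)
  obtain ⟨ρ, hρ⟩ := hKb.subset_closedBall x₀
  set ρ' := max ρ 0 with hρ'
  have hρρ' : K ⊆ Metric.closedBall x₀ ρ' :=
    hρ.trans (Metric.closedBall_subset_closedBall (le_max_left ρ 0))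
  refine ⟨Metric.closedBall x₀ (ρ' + δ' + 1), Metric.isBounded_closedBall, ?_⟩
  rintro a ⟨ha, haK⟩ v ⟨hv, _⟩
  by_contra hlt
  push_neg at hlt
  obtain ⟨pth, hdiam⟩ := hδ a v hlt
  obtain ⟨c, hcC, hcr⟩ := path_crossing hd hUo hVo hcomp (hAU ha) hv pth
  have hbd := (isCompact_range pth.continuous).isBounded
  have hac : dist a c ≤ δ' :=
    (Metric.dist_le_diam_of_mem hbd ⟨0, pth.source⟩ hcr).trans (hdiam.trans (le_max_left δ 0))
  have had : ρ' + δ' + 1 < dist a x₀ := by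
    by_contra hle
    push_neg at hle
    exact haK (Metric.mem_closedBall.mpr hle)
  have haK2 : a ∉ K := fun hh => by
    have := Metric.mem_closedBall.mp (hρρ' hh); linarith
  have hcK2 : c ∉ K := fun hh => by
    have h1 := Metric.mem_closedBall.mp (hρρ' hh)
    have h2 : dist a x₀ ≤ dist a c + dist c x₀ := dist_triangle a c x₀
    linarith
  have := hKp a ⟨ha, haK2⟩ c ⟨hcC, hcK2⟩
  linarith

lemma disjoint_traces {D E : Set X} (h : AsympDisjoint D E) :
    Disjoint (higsonTrace X D) (higsonTrace X E) := by
  rcases D.eq_empty_or_nonempty with rfl | hD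
  · have hemp : higsonTrace X (∅ : Set X) = ∅ := by
      simp [higsonTrace]
    rw [hemp]
    exact Set.empty_disjoint _
  · obtain ⟨x₀, hx₀⟩ := hD
    obtain ⟨ψ, hso, hψD, ρ, hρE⟩ := exists_sep_fun x₀ ⟨x₀, hx₀⟩ h
    rw [Set.disjoint_left]
    rintro p ⟨hpD, hpcor⟩ ⟨hpE, -⟩
    have h0 : p ⟨ψ, hso⟩ = 0 := eval_eq_on_closure ⟨ψ, hso⟩ D 0 hψD hpD
    have hpE' : p ∈ closure (higsonEmb X '' (E \ Metric.closedBall x₀ ρ)) :=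
      corona_closure_diff E _ Metric.isBounded_closedBall hpE hpcor
    have h1 : p ⟨ψ, hso⟩ = 1 := by
      apply eval_eq_on_closure ⟨ψ, hso⟩ _ 1 ?_ hpE'
      rintro e ⟨he, heB⟩
      apply hρE e he
      by_contra hle
      push_neg at hle
      exact heB (Metric.mem_closedBall.mpr hle)
    rw [h0] at h1
    norm_num at h1

end Extra

/-- Proposition `p:sep`: in a proper uniformly arcwise connected space, a
separator `C` between asymptotically disjoint sets `A` and `B` which is asymptotically
disjoint from `A ∪ B` is an asymptotic separator between `A` and `B`. -/
theorem separator_is_asymptotic_separator (X : Type u) [MetricSpace X] [ProperSpace X]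
    (huac : UnifArcConnected X) (A B C : Set X)
    (hAB : AsympDisjoint A B) (hsep : IsSeparator A B C)
    (hC : AsympDisjoint C (A ∪ B)) :
    IsAsympSeparator X A B C := by
  classical
  obtain ⟨hCclosed, U₀, V₀, hUo, hVo, hdUV, hAU, hBV, hcomp⟩ := hsep
  have hCA : AsympDisjoint C A := hC.mono_right' Set.subset_union_left
  have hCB : AsympDisjoint C B := hC.mono_right' Set.subset_union_right
  have hAC : AsympDisjoint A C := hCA.symm'
  have hBC : AsympDisjoint B C := hCB.symm'
  have hAV : AsympDisjoint A V₀ := asympDisjoint_side huac hUo hVo hdUV hcomp hAU hAC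
  have hBU : AsympDisjoint B U₀ := asympDisjoint_side huac hVo hUo hdUV.symm
    (by rw [hcomp, Set.union_comm]) hBV hBC
  have hcor : higsonCorona X ⊆ closure (higsonEmb X '' U₀) ∪ closure (higsonEmb X '' V₀) ∪
      closure (higsonEmb X '' C) := by
    intro z hz
    have huniv : (Set.univ : Set X) = U₀ ∪ V₀ ∪ C := by
      ext w
      simp only [Set.mem_univ, true_iff]
      by_cases hw : w ∈ C
      · exact Or.inr hw
      · have : w ∈ Cᶜ := hw
        rw [hcomp] at this
        exact Or.inl this
    have h1 : z ∈ closure (Set.range (higsonEmb X)) := hz.1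
    rw [← Set.image_univ, huniv, Set.image_union, Set.image_union, closure_union,
      closure_union] at h1
    exact h1
  refine ⟨Set.inter_subset_right, ⟨closure (higsonEmb X '' C), isClosed_closure, rfl⟩, ?_⟩
  refine ⟨(closure (higsonEmb X '' C))ᶜ ∩ (closure (higsonEmb X '' V₀))ᶜ,
          (closure (higsonEmb X '' C))ᶜ ∩ (closure (higsonEmb X '' U₀))ᶜ,
          isClosed_closure.isOpen_compl.inter isClosed_closure.isOpen_compl,
          isClosed_closure.isOpen_compl.inter isClosed_closure.isOpen_compl, ?_, ?_, ?_, ?_⟩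
  · -- disjointness of the two sides
    rw [Set.disjoint_left]
    rintro z ⟨⟨hz1, hz2⟩, hzc⟩ ⟨⟨-, hz4⟩, -⟩
    rcases hcor hzc with (hzU | hzV) | hzC
    · exact hz4 hzU
    · exact hz2 hzV
    · exact hz1 hzC
  · -- trace of A is inside the first side
    rintro p ⟨hpA, hpc⟩
    constructor
    · intro hpC
      exact Set.disjoint_left.mp (disjoint_traces hAC) ⟨hpA, hpc⟩ ⟨hpC, hpc⟩
    · intro hpV
      exact Set.disjoint_left.mp (disjoint_traces hAV) ⟨hpA, hpc⟩ ⟨hpV, hpc⟩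
  · -- trace of B is inside the second side
    rintro p ⟨hpB, hpc⟩
    constructor
    · intro hpC
      exact Set.disjoint_left.mp (disjoint_traces hBC) ⟨hpB, hpc⟩ ⟨hpC, hpc⟩
    · intro hpU
      exact Set.disjoint_left.mp (disjoint_traces hBU) ⟨hpB, hpc⟩ ⟨hpU, hpc⟩
  · -- the partition equality
    apply Set.Subset.antisymm
    · rintro z ⟨hzc, hzC⟩
      have hznC : z ∉ closure (higsonEmb X '' C) := fun hcl => hzC ⟨hcl, hzc⟩
      by_cases hzU₀ : z ∈ closure (higsonEmb X '' U₀)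
      · left
        refine ⟨⟨hznC, fun hzV₀ => hznC ?_⟩, hzc⟩
        exact closure_side_inter huac hUo hVo hdUV hcomp hzU₀ hzV₀
      · right
        exact ⟨⟨hznC, hzU₀⟩, hzc⟩
    · rintro z (⟨⟨hz1, -⟩, hzc⟩ | ⟨⟨hz1, -⟩, hzc⟩) <;>
        exact ⟨hzc, fun hmem => hz1 hmem.1⟩
end
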